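/- Suppose a tree metric embedding satisfies: for x on a path P glued into a tree via a cycle C of length L with anchors p, q that are (1/6)·L apart, and the image of x is the flattening at p with probability 1/2 and at q with probability 1/2. Then for any x, y ∈ C, E[flattened distance] = (1/2)|d_C(x,p) − d_C(y,p)| + (1/2)|d_C(x,q) − d_C(y,q)| ≥ (1/3)·d_C(x,y). -/

import Mathlib

/-- The intrinsic metric on the cycle `ℝ/Lℤ` of total length `L`, in terms of
representatives in `ℝ`: `d_C(x,y) = min(m, L − m)` where `m = (x−y) mod L`. -/
noncomputable def cycDist (L x y : ℝ) : ℝ :=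
  min ((x - y) - L * (⌊(x - y) / L⌋ : ℤ)) (L - ((x - y) - L * (⌊(x - y) / L⌋ : ℤ)))

lemma fract_sub_fract (u v : ℝ) : Int.fract (Int.fract u - Int.fract v) = Int.fract (u - v) := by
  rw [show Int.fract u - Int.fract v = (u - v) - ((⌊u⌋ - ⌊v⌋ : ℤ) : ℝ) from by
      simp only [Int.fract]; push_cast; ring,
    Int.fract_sub_intCast]

lemma fract_add_fract (u v : ℝ) : Int.fract (Int.fract u + Int.fract v) = Int.fract (u + v) := by
  rw [show Int.fract u + Int.fract v = (u + v) - ((⌊u⌋ + ⌊v⌋ : ℤ) : ℝ) from by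
      simp only [Int.fract]; push_cast; ring,
    Int.fract_sub_intCast]

lemma cycDist_eq (L : ℝ) (hL : 0 < L) (u v : ℝ) :
    cycDist L u v = L * min (Int.fract ((u - v) / L)) (1 - Int.fract ((u - v) / L)) := by
  unfold cycDist
  have h : u - v - L * (⌊(u - v) / L⌋ : ℤ) = L * Int.fract ((u - v) / L) := by
    simp only [Int.fract]; field_simp
  rw [h, show L - L * Int.fract ((u - v) / L) = L * (1 - Int.fract ((u - v) / L)) by ring]
  rcases le_total (Int.fract ((u - v) / L)) (1 - Int.fract ((u - v) / L)) with h1 | h1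
  · rw [min_eq_left (by nlinarith), min_eq_left h1]
  · rw [min_eq_right (by nlinarith), min_eq_right h1]

set_option maxHeartbeats 4000000 in
lemma tm_core (a b c : ℝ) (ha0 : 0 ≤ a) (ha1 : a < 1) (hb0 : 0 ≤ b) (hb1 : b < 1)
    (hc : c = 1/6 ∨ c = 5/6) :
    (2/3) * min (Int.fract (a - b)) (1 - Int.fract (a - b)) ≤
      |min a (1 - a) - min b (1 - b)| +
        |min (Int.fract (a + c)) (1 - Int.fract (a + c)) -
          min (Int.fract (b + c)) (1 - Int.fract (b + c))| := by
  have hc0 : 0 < c := by rcases hc with h | h <;> rw [h] <;> norm_num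
  have hc1 : c < 1 := by rcases hc with h | h <;> rw [h] <;> norm_num
  have hab : Int.fract (a - b) = if b ≤ a then a - b else a - b + 1 := by
    split_ifs with h
    · exact Int.fract_eq_self.mpr ⟨by linarith, by linarith⟩
    · push_neg at h
      have e : Int.fract (a - b) = Int.fract (a - b + 1) := by
        rw [show a - b + 1 = (a - b) + ((1 : ℤ) : ℝ) by push_cast; ring, Int.fract_add_intCast]
      rw [e]; exact Int.fract_eq_self.mpr ⟨by linarith, by linarith⟩
  have hfa : ∀ t : ℝ, 0 ≤ t → t < 1 →
      Int.fract (t + c) = if t + c < 1 then t + c else t + c - 1 := by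
    intro t ht0 ht1
    split_ifs with h
    · exact Int.fract_eq_self.mpr ⟨by linarith, h⟩
    · push_neg at h
      have e : Int.fract (t + c) = Int.fract (t + c - 1) := by
        rw [show t + c - 1 = (t + c) - ((1 : ℤ) : ℝ) by push_cast; ring, Int.fract_sub_intCast]
      rw [e]; exact Int.fract_eq_self.mpr ⟨by linarith, by linarith⟩
  have H1 := le_abs_self (min a (1 - a) - min b (1 - b))
  have H2 := neg_abs_le (min a (1 - a) - min b (1 - b))
  have H3 := le_abs_self (min (Int.fract (a + c)) (1 - Int.fract (a + c)) -
    min (Int.fract (b + c)) (1 - Int.fract (b + c)))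
  have H4 := neg_abs_le (min (Int.fract (a + c)) (1 - Int.fract (a + c)) -
    min (Int.fract (b + c)) (1 - Int.fract (b + c)))
  rw [hab]
  rw [hfa a ha0 ha1, hfa b hb0 hb1] at H3 H4 ⊢
  rcases hc with h | h <;> subst h <;>
    simp only [min_def] at H1 H2 H3 H4 ⊢ <;>
    split_ifs at H1 H2 H3 H4 ⊢ <;> linarith

/-- Choosing uniformly at random between flattening a cycle at `p` or at `q`, where
`d_C(p,q) = L/6`, the expected flattened distance between `x` and `y` is at least
`(1/3)·d_C(x,y)`. -/
theorem expected_flattened_distance (L : ℝ) (hL : 0 < L) (p q x y : ℝ)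
    (hpq : cycDist L p q = L / 6) :
    (1 / 3) * cycDist L x y ≤
      (1 / 2) * |cycDist L x p - cycDist L y p| +
        (1 / 2) * |cycDist L x q - cycDist L y q| := by
  have hLne : L ≠ 0 := hL.ne'
  have hc' : min (Int.fract ((p - q) / L)) (1 - Int.fract ((p - q) / L)) = 1 / 6 := by
    rw [cycDist_eq L hL p q] at hpq
    have h6 : L * min (Int.fract ((p - q) / L)) (1 - Int.fract ((p - q) / L)) = L * (1 / 6) := by
      rw [hpq]; ring
    exact mul_left_cancel₀ hLne h6
  have hc16 : Int.fract ((p - q) / L) = 1/6 ∨ Int.fract ((p - q) / L) = 5/6 := by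
    rcases le_total (Int.fract ((p - q) / L)) (1 - Int.fract ((p - q) / L)) with h | h
    · left; rw [min_eq_left h] at hc'; linarith
    · right; rw [min_eq_right h] at hc'; linarith
  have core := tm_core (Int.fract ((x - p) / L)) (Int.fract ((y - p) / L))
    (Int.fract ((p - q) / L)) (Int.fract_nonneg _) (Int.fract_lt_one _)
    (Int.fract_nonneg _) (Int.fract_lt_one _) hc16
  have hxy : Int.fract (Int.fract ((x - p) / L) - Int.fract ((y - p) / L))
      = Int.fract ((x - y) / L) := by
    rw [fract_sub_fract]; congr 1; field_simp; ring
  have hxq : Int.fract (Int.fract ((x - p) / L) + Int.fract ((p - q) / L))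
      = Int.fract ((x - q) / L) := by
    rw [fract_add_fract]; congr 1; field_simp; ring
  have hyq : Int.fract (Int.fract ((y - p) / L) + Int.fract ((p - q) / L))
      = Int.fract ((y - q) / L) := by
    rw [fract_add_fract]; congr 1; field_simp; ring
  rw [hxy, hxq, hyq] at core
  rw [cycDist_eq L hL x y, cycDist_eq L hL x p, cycDist_eq L hL y p,
    cycDist_eq L hL x q, cycDist_eq L hL y q]
  rw [show L * min (Int.fract ((x - p) / L)) (1 - Int.fract ((x - p) / L)) -
        L * min (Int.fract ((y - p) / L)) (1 - Int.fract ((y - p) / L)) =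
      L * (min (Int.fract ((x - p) / L)) (1 - Int.fract ((x - p) / L)) -
        min (Int.fract ((y - p) / L)) (1 - Int.fract ((y - p) / L))) by ring,
    show L * min (Int.fract ((x - q) / L)) (1 - Int.fract ((x - q) / L)) -
        L * min (Int.fract ((y - q) / L)) (1 - Int.fract ((y - q) / L)) =
      L * (min (Int.fract ((x - q) / L)) (1 - Int.fract ((x - q) / L)) -
        min (Int.fract ((y - q) / L)) (1 - Int.fract ((y - q) / L))) by ring,
    abs_mul, abs_mul, abs_of_pos hL]
  have hmul := mul_le_mul_of_nonneg_left core hL.le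
  nlinarith [hmul]
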